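/- There exist positive constants c₁, c₂, c₃ such that for every dimension d ≥ 1, every x ∈ ℝ^d and every u ∈ ℝ, the sum over k = 1,…,d of |‖x + u e_k‖₂ - ‖x‖₂|² is at most u² (c₁ + c₂ d u² / (‖x‖₂² + c₃ u²)). -/

import Mathlib

open Finset RealInnerProductSpace

theorem stmt_8 :
    ∃ c₁ c₂ c₃ : ℝ, 0 < c₁ ∧ 0 < c₂ ∧ 0 < c₃ ∧
      ∀ (d : ℕ), 1 ≤ d → ∀ (x : EuclideanSpace ℝ (Fin d)) (u : ℝ),
        ∑ k : Fin d, |‖x + u • EuclideanSpace.single k (1 : ℝ)‖ - ‖x‖| ^ 2 ≤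
          u ^ 2 * (c₁ + c₂ * d * u ^ 2 / (‖x‖ ^ 2 + c₃ * u ^ 2)) := by
  refine ⟨16, 4, 2/3, by norm_num, by norm_num, by norm_num, ?_⟩
  intro d _ x u
  by_cases hu : u = 0
  · subst hu
    simp
  have hnorm : ‖x‖ ^ 2 = ∑ k : Fin d, (x k) ^ 2 := by
    rw [EuclideanSpace.norm_eq, Real.sq_sqrt (by positivity)]
    simp [sq_abs]
  set D : ℝ := ‖x‖ ^ 2 / 2 + u ^ 2 / 3 with hDdef
  have hD : 0 < D := by positivity
  clear_value D
  have hterm : ∀ k : Fin d,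
      |‖x + u • EuclideanSpace.single k (1 : ℝ)‖ - ‖x‖| ^ 2 * D ≤
        8 * u ^ 2 * (x k) ^ 2 + 2 * u ^ 4 := by
    intro k
    have hxk : (x k) ^ 2 ≤ ‖x‖ ^ 2 := by
      rw [hnorm]
      exact Finset.single_le_sum (f := fun i => (x i) ^ 2) (fun i _ => sq_nonneg _) (Finset.mem_univ k)
    have ha : ‖x + u • EuclideanSpace.single k (1 : ℝ)‖ ^ 2
        = ‖x‖ ^ 2 + 2 * (u * x k) + u ^ 2 := by
      rw [norm_add_sq_real]
      have h1 : (inner ℝ x (u • EuclideanSpace.single k (1 : ℝ)) : ℝ) = u * x k := by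
        rw [real_inner_smul_right]
        have := EuclideanSpace.inner_single_right (𝕜 := ℝ) k 1 x
        simp only [starRingEnd_apply, star_trivial, one_mul] at this
        rw [this]
      rw [h1, norm_smul]
      simp
    set a := ‖x + u • EuclideanSpace.single k (1 : ℝ)‖ with hadef
    set b := ‖x‖ with hbdef
    clear_value a b
    have hann : 0 ≤ a := hadef ▸ norm_nonneg _
    have hbnn : 0 ≤ b := hbdef ▸ norm_nonneg _
    have habD : D ≤ (a + b) ^ 2 := by nlinarith [sq_nonneg (3 * x k + 2 * u), mul_nonneg hann hbnn, hxk, ha]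
    have hdiff : (a - b) ^ 2 * (a + b) ^ 2 = (2 * (u * x k) + u ^ 2) ^ 2 := by
      have : (a - b) ^ 2 * (a + b) ^ 2 = (a ^ 2 - b ^ 2) ^ 2 := by ring
      rw [this, ha]; ring
    rw [sq_abs]
    nlinarith [sq_nonneg (a - b), sq_nonneg (2 * u * x k - u ^ 2), sq_nonneg u]
  have hsum : (∑ k : Fin d, |‖x + u • EuclideanSpace.single k (1 : ℝ)‖ - ‖x‖| ^ 2) * D
      ≤ 8 * u ^ 2 * ‖x‖ ^ 2 + 2 * d * u ^ 4 := by
    rw [Finset.sum_mul]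
    calc _ ≤ ∑ k : Fin d, (8 * u ^ 2 * (x k) ^ 2 + 2 * u ^ 4) :=
          Finset.sum_le_sum fun k _ => hterm k
      _ = 8 * u ^ 2 * ‖x‖ ^ 2 + 2 * d * u ^ 4 := by
          rw [Finset.sum_add_distrib, ← Finset.mul_sum, ← hnorm]
          simp [Finset.sum_const]
          ring
  set S : ℝ := ‖x‖ ^ 2 + 2 / 3 * u ^ 2 with hSdef
  have hS : 0 < S := by positivity
  have hDS : D = S / 2 := by rw [hSdef, hDdef]; ring
  have h1 : (∑ k : Fin d, |‖x + u • EuclideanSpace.single k (1 : ℝ)‖ - ‖x‖| ^ 2)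
      ≤ (8 * u ^ 2 * ‖x‖ ^ 2 + 2 * d * u ^ 4) / D := (le_div_iff₀ hD).mpr hsum
  have h2 : (8 * u ^ 2 * ‖x‖ ^ 2 + 2 * d * u ^ 4) / D
      = (16 * u ^ 2 * ‖x‖ ^ 2 + 4 * d * u ^ 4) / S := by
    rw [hDS]; field_simp; ring
  have h3 : u ^ 2 * (16 + 4 * d * u ^ 2 / S) = (16 * u ^ 2 * S + 4 * d * u ^ 4) / S := by
    field_simp
  calc _ ≤ (8 * u ^ 2 * ‖x‖ ^ 2 + 2 * d * u ^ 4) / D := h1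
    _ = (16 * u ^ 2 * ‖x‖ ^ 2 + 4 * d * u ^ 4) / S := h2
    _ ≤ (16 * u ^ 2 * S + 4 * d * u ^ 4) / S := by
        gcongr
        rw [hSdef]; nlinarith [sq_nonneg u]
    _ = u ^ 2 * (16 + 4 * d * u ^ 2 / S) := h3.symm
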